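/- Let N be a natural number and m an integer with 0 ≤ m ≤ N and N + m even, and set μ = (N+m)/2. Then the number of walks of length N from 0 to m all of whose partial sums are ≥ −3 equals ((m+4)(N+1)·((m+2)(m+6) + N(N+2)) / (2(μ+1)(μ+2)(μ+3)(μ+4))) · C(N, μ), where this quotient is an equality of rational numbers with the cardinality cast to ℚ. -/

import Mathlib

def wf : ℕ → ℤ → ℕ
  | 0, m => if m = 0 then 1 else 0
  | (N+1), m => if m < -3 then 0 else wf N (m-1) + wf N (m+1)

lemma wf_neg (N : ℕ) (m : ℤ) (hm : m < -3) : wf N m = 0 := by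
  cases N with
  | zero =>
    have : m ≠ 0 := by omega
    simp [wf, this]
  | succ n => simp [wf, hm]

abbrev WalkCond (N : ℕ) (m : ℤ) (s : Fin N → ℤ) : Prop :=
  (∀ j, s j = -1 ∨ s j = 1) ∧
    (∑ i, s i) = m ∧
    ∀ j ≤ N, -3 ≤ (∑ i ∈ Finset.univ.filter (fun i : Fin N => (i : ℕ) < j), s i)

lemma partial_cast (N : ℕ) (s : Fin (N+1) → ℤ) (j : ℕ) (hj : j ≤ N) :
    (∑ i ∈ Finset.univ.filter (fun i : Fin (N+1) => (i : ℕ) < j), s i)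
      = ∑ i ∈ Finset.univ.filter (fun i : Fin N => (i : ℕ) < j), s i.castSucc := by
  rw [Finset.sum_filter, Finset.sum_filter, Fin.sum_univ_castSucc]
  simp [Fin.val_last, Nat.not_lt.mpr hj]

lemma filter_all (N : ℕ) : (Finset.univ.filter (fun i : Fin N => (i : ℕ) < N)) = Finset.univ :=
  Finset.filter_true_of_mem fun i _ => i.isLt

lemma snoc_sum (N : ℕ) (s' : Fin N → ℤ) (t : ℤ) :
    (∑ i, (Fin.snoc s' t : Fin (N+1) → ℤ) i) = (∑ i, s' i) + t := by
  rw [Fin.sum_univ_castSucc]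
  simp

lemma snoc_mem (N : ℕ) (m c t : ℤ) (s' : Fin N → ℤ) (h : WalkCond N c s')
    (ht : t = -1 ∨ t = 1) (hct : c + t = m) (hm : -3 ≤ m) :
    WalkCond (N+1) m (Fin.snoc s' t) := by
  refine ⟨?_, ?_, ?_⟩
  · intro j
    refine Fin.lastCases ?_ ?_ j
    · simpa using ht
    · intro i; simpa using h.1 i
  · rw [snoc_sum, h.2.1, hct]
  · intro j hj
    rcases Nat.lt_or_ge j (N+1) with hjN | hjN
    · have hjN' : j ≤ N := by omega
      rw [partial_cast N _ j hjN']
      simp only [Fin.snoc_castSucc]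
      exact h.2.2 j hjN'
    · have : j = N + 1 := by omega
      subst this
      rw [filter_all, snoc_sum, h.2.1, hct]
      exact hm

lemma init_mem (N : ℕ) (m : ℤ) (s : Fin (N+1) → ℤ) (h : WalkCond (N+1) m s) :
    WalkCond N (m - s (Fin.last N)) (fun i => s i.castSucc) := by
  refine ⟨fun j => h.1 _, ?_, ?_⟩
  · have := h.2.1
    rw [Fin.sum_univ_castSucc] at this
    show (∑ i : Fin N, s i.castSucc) = _
    omega
  · intro j hj
    have := h.2.2 j (by omega)
    rwa [partial_cast N s j hj] at this

instance walkFinite (N : ℕ) (m : ℤ) : Finite {s : Fin N → ℤ // WalkCond N m s} := by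
  apply Finite.of_injective (fun s : {s : Fin N → ℤ // WalkCond N m s} =>
    (fun j => decide (s.1 j = 1) : Fin N → Bool))
  intro a b h
  ext j
  have := congrFun h j
  rcases a.2.1 j with ha | ha <;> rcases b.2.1 j with hb | hb <;>
    simp [ha, hb] at this ⊢

lemma card_step (N : ℕ) (m : ℤ) (hm : -3 ≤ m) :
    Nat.card {s : Fin (N+1) → ℤ // WalkCond (N+1) m s}
      = Nat.card {s : Fin N → ℤ // WalkCond N (m-1) s}
        + Nat.card {s : Fin N → ℤ // WalkCond N (m+1) s} := by
  rw [← Nat.card_sum]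
  refine (Nat.card_eq_of_bijective (fun x => match x with
    | Sum.inl s' => ⟨Fin.snoc s'.1 1,
        snoc_mem N m (m-1) 1 s'.1 s'.2 (Or.inr rfl) (by ring) hm⟩
    | Sum.inr s' => ⟨Fin.snoc s'.1 (-1),
        snoc_mem N m (m+1) (-1) s'.1 s'.2 (Or.inl rfl) (by ring) hm⟩) ⟨?_, ?_⟩).symm
  · rintro (a | a) (b | b) h
    · have h' : (Fin.snoc a.1 1 : Fin (N+1) → ℤ) = Fin.snoc b.1 1 := congrArg Subtype.val h
      congr 1
      ext1
      funext i
      have := congrFun h' i.castSucc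
      simpa using this
    · have h' : (Fin.snoc a.1 1 : Fin (N+1) → ℤ) = Fin.snoc b.1 (-1) := congrArg Subtype.val h
      have := congrFun h' (Fin.last N)
      simp at this
    · have h' : (Fin.snoc a.1 (-1) : Fin (N+1) → ℤ) = Fin.snoc b.1 1 := congrArg Subtype.val h
      have := congrFun h' (Fin.last N)
      simp at this
    · have h' : (Fin.snoc a.1 (-1) : Fin (N+1) → ℤ) = Fin.snoc b.1 (-1) := congrArg Subtype.val h
      congr 1
      ext1
      funext i
      have := congrFun h' i.castSucc
      simpa using this
  · intro s
    rcases s.2.1 (Fin.last N) with hl | hl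
    · refine ⟨Sum.inr ⟨fun i => s.1 i.castSucc, ?_⟩, ?_⟩
      · have := init_mem N m s.1 s.2
        rw [hl] at this
        have h2 : m - -1 = m + 1 := by ring
        rwa [h2] at this
      · apply Subtype.ext
        show (Fin.snoc (fun i => s.1 i.castSucc) (-1) : Fin (N+1) → ℤ) = s.1
        rw [← hl]
        exact Fin.snoc_init_self s.1
    · refine ⟨Sum.inl ⟨fun i => s.1 i.castSucc, ?_⟩, ?_⟩
      · have := init_mem N m s.1 s.2
        rw [hl] at this
        have h2 : m - 1 = m - 1 := rfl
        rwa [h2] at this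
      · apply Subtype.ext
        show (Fin.snoc (fun i => s.1 i.castSucc) 1 : Fin (N+1) → ℤ) = s.1
        rw [← hl]
        exact Fin.snoc_init_self s.1

lemma walk_end (N : ℕ) (m : ℤ) (s : Fin N → ℤ) (h : WalkCond N m s) : -3 ≤ m := by
  have := h.2.2 N le_rfl
  rwa [filter_all, h.2.1] at this

lemma card_walk (N : ℕ) : ∀ m : ℤ, Nat.card {s : Fin N → ℤ // WalkCond N m s} = wf N m := by
  induction N with
  | zero =>
    intro m
    by_cases hm : m = 0
    · subst hm
      have hall : ∀ s : Fin 0 → ℤ, WalkCond 0 0 s := by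
        intro s
        refine ⟨fun j => j.elim0, by simp, fun j hj => ?_⟩
        have : (Finset.univ.filter (fun i : Fin 0 => (i : ℕ) < j)) = ∅ := by
          simp [Finset.eq_empty_iff_forall_notMem]
        rw [this]
        simp
      haveI : Unique {s : Fin 0 → ℤ // WalkCond 0 0 s} :=
        ⟨⟨⟨fun i => i.elim0, hall _⟩⟩, fun a => Subtype.ext (funext fun i => i.elim0)⟩
      simp [wf, Nat.card_unique]
    · haveI : IsEmpty {s : Fin 0 → ℤ // WalkCond 0 m s} :=
        ⟨fun s => hm (by simpa using s.2.2.1.symm)⟩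
      simp [wf, hm, Nat.card_of_isEmpty]
  | succ N ih =>
    intro m
    by_cases hm : m < -3
    · haveI : IsEmpty {s : Fin (N+1) → ℤ // WalkCond (N+1) m s} :=
        ⟨fun s => absurd (walk_end _ _ _ s.2) (not_le.mpr hm)⟩
      simp [wf, hm, Nat.card_of_isEmpty]
    · rw [card_step N m (not_lt.mp hm), ih, ih]
      simp [wf, hm]

lemma choose_shift (k : ℕ) :
    ((2*k+3).choose k : ℤ) - (2*k+3).choose (k+4)
      = ((2*k+2).choose k : ℤ) - (2*k+2).choose (k+4) := by
  cases k with
  | zero => norm_num [Nat.choose]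
  | succ j =>
    have e1 : 2*(j+1)+3 = (2*j+4)+1 := by ring
    have e2 : 2*(j+1)+2 = 2*j+4 := by ring
    have e3 : (j+1)+4 = (j+4)+1 := by ring
    rw [e1, e2, e3]
    have p1 := Nat.choose_succ_succ (2*j+4) j
    have p2 := Nat.choose_succ_succ (2*j+4) (j+4)
    have sym : (2*j+4).choose j = (2*j+4).choose (j+4) := by
      have := Nat.choose_symm (show j ≤ 2*j+4 by omega)
      have e4 : 2*j+4-j = j+4 := by omega
      rw [e4] at this
      exact this.symm
    rw [p1, p2]
    push_cast
    rw [sym]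
    ring

lemma wf_choose : ∀ N : ℕ, ∀ (k : ℕ) (m : ℤ), -3 ≤ m → (N : ℤ) + m = 2*k →
    (wf N m : ℤ) = (N.choose k : ℤ) - N.choose (k+4) := by
  intro N
  induction N with
  | zero =>
    intro k m hm hk
    rcases Nat.eq_zero_or_pos k with h0 | h0
    · subst h0
      have hm0 : m = 0 := by omega
      subst hm0
      simp [wf]
    · have hm0 : m ≠ 0 := by omega
      have c1 : Nat.choose 0 k = 0 := Nat.choose_eq_zero_of_lt (by omega)
      have c2 : Nat.choose 0 (k+4) = 0 := Nat.choose_eq_zero_of_lt (by omega)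
      simp [wf, hm0, c1, c2]
  | succ N ih =>
    intro k m hm hk
    have hnot : ¬ m < -3 := not_lt.mpr hm
    have hrec : wf (N+1) m = wf N (m-1) + wf N (m+1) := by simp [wf, hnot]
    rw [hrec]
    rcases Nat.eq_zero_or_pos k with rfl | hk1
    · have hN : N ≤ 2 := by omega
      interval_cases N
      · have hm' : m = -1 := by omega
        subst hm'
        norm_num [wf, Nat.choose]
      · have hm' : m = -2 := by omega
        subst hm'
        norm_num [wf, Nat.choose]
      · have hm' : m = -3 := by omega
        subst hm'
        norm_num [wf, Nat.choose]
    · obtain ⟨j, rfl⟩ : ∃ j, k = j + 1 := ⟨k-1, by omega⟩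
      have h1 : (wf N (m+1) : ℤ) = (N.choose (j+1) : ℤ) - N.choose (j+5) := by
        have := ih (j+1) (m+1) (by omega) (by push_cast at hk ⊢; omega)
        simpa [show (j+1)+4 = j+5 from by ring] using this
      by_cases hm3 : m = -3
      · subst hm3
        have h0 : wf N (-3-1) = 0 := wf_neg N _ (by norm_num)
        have hN : N = 2*j + 4 := by push_cast at hk; omega
        have key := choose_shift (j+1)
        have e1 : 2*(j+1)+3 = N+1 := by omega
        have e2 : 2*(j+1)+2 = N := by omega
        have e3 : (j+1)+4 = j+5 := by ring
        rw [e1, e2, e3] at key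
        rw [h0, show j+1+4 = j+5 by omega]
        norm_num at h1 ⊢
        omega
      · have h2 : (wf N (m-1) : ℤ) = (N.choose j : ℤ) - N.choose (j+4) := by
          have := ih j (m-1) (by omega) (by push_cast at hk ⊢; omega)
          exact this
        have p1 : (N+1).choose (j+1) = N.choose j + N.choose (j+1) :=
          Nat.choose_succ_succ N j
        have p2 : (N+1).choose (j+5) = N.choose (j+4) + N.choose (j+5) :=
          Nat.choose_succ_succ N (j+4)
        rw [show j+1+4 = j+5 by omega, p1, p2]
        push_cast
        omega

theorem walk_ge_neg_three_count (N : ℕ) (m : ℤ) (hm0 : 0 ≤ m) (hmN : m ≤ (N : ℤ))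
    (heven : Even ((N : ℤ) + m)) (μ : ℤ) (hμ : μ = ((N : ℤ) + m) / 2) :
    (Nat.card {s : Fin N → ℤ //
        (∀ j, s j = -1 ∨ s j = 1) ∧
        (∑ i, s i) = m ∧
        ∀ j ≤ N, -3 ≤ (∑ i ∈ Finset.univ.filter (fun i : Fin N => (i : ℕ) < j), s i)} : ℚ)
      = ((m : ℚ) + 4) * ((N : ℚ) + 1) *
            (((m : ℚ) + 2) * ((m : ℚ) + 6) + (N : ℚ) * ((N : ℚ) + 2)) /
          (2 * ((μ : ℚ) + 1) * ((μ : ℚ) + 2) * ((μ : ℚ) + 3) * ((μ : ℚ) + 4)) *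
          (Nat.choose N μ.toNat : ℚ) := by
  obtain ⟨r, hr⟩ := heven
  have h2μ : 2 * μ = (N : ℤ) + m := by omega
  have hμ0 : 0 ≤ μ := by omega
  obtain ⟨k, hkμ⟩ : ∃ k : ℕ, (k : ℤ) = μ := ⟨μ.toNat, Int.toNat_of_nonneg hμ0⟩
  have htn : μ.toNat = k := by omega
  rw [htn]
  have hNm : (N : ℤ) + m = 2 * k := by omega
  have hkN : k ≤ N := by omega
  have hcard : (Nat.card {s : Fin N → ℤ //
        (∀ j, s j = -1 ∨ s j = 1) ∧
        (∑ i, s i) = m ∧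
        ∀ j ≤ N, -3 ≤ (∑ i ∈ Finset.univ.filter (fun i : Fin N => (i : ℕ) < j), s i)} : ℤ)
      = (N.choose k : ℤ) - N.choose (k+4) := by
    rw [show (Nat.card {s : Fin N → ℤ //
        (∀ j, s j = -1 ∨ s j = 1) ∧
        (∑ i, s i) = m ∧
        ∀ j ≤ N, -3 ≤ (∑ i ∈ Finset.univ.filter (fun i : Fin N => (i : ℕ) < j), s i)})
        = wf N m from card_walk N m]
    exact wf_choose N k m (by omega) hNm
  have hcardQ : (Nat.card {s : Fin N → ℤ //
        (∀ j, s j = -1 ∨ s j = 1) ∧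
        (∑ i, s i) = m ∧
        ∀ j ≤ N, -3 ≤ (∑ i ∈ Finset.univ.filter (fun i : Fin N => (i : ℕ) < j), s i)} : ℚ)
      = (N.choose k : ℚ) - N.choose (k+4) := by exact_mod_cast hcard
  rw [hcardQ]
  clear hcard hcardQ
  have hμQ : (μ : ℚ) = (k : ℚ) := by exact_mod_cast hkμ.symm
  rw [hμQ]
  have hmQ : (m : ℚ) = 2 * k - N := by
    have : (m : ℚ) = 2 * (k : ℚ) - N := by exact_mod_cast (by omega : m = 2 * (k:ℤ) - N)
    exact this
  rw [hmQ]
  have hD : (2 * ((k:ℚ) + 1) * ((k:ℚ) + 2) * ((k:ℚ) + 3) * ((k:ℚ) + 4)) ≠ 0 := by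
    have h1 : (0:ℚ) < (k:ℚ) + 1 := by positivity
    positivity
  rw [div_mul_eq_mul_div, eq_div_iff hD]
  rcases lt_or_ge N (k + 4) with hc | hc
  · -- small case: choose (k+4) = 0, N = k + d, d ≤ 3
    have hC4 : N.choose (k+4) = 0 := Nat.choose_eq_zero_of_lt (by omega)
    rw [hC4]
    obtain ⟨d, hd, hNd⟩ : ∃ d, d ≤ 3 ∧ N = k + d := ⟨N - k, by omega, by omega⟩
    subst hNd
    have hNQ : ((k + d : ℕ) : ℚ) = (k : ℚ) + d := by push_cast; ring
    rw [hNQ]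
    interval_cases d <;> push_cast <;> ring
  · -- main case: use choose_succ_right_eq chain
    have chooseq : ∀ a : ℕ, a + 1 ≤ N →
        (N.choose (a+1) : ℚ) * ((a:ℚ)+1) = (N.choose a : ℚ) * ((N:ℚ) - a) := by
      intro a ha
      have h := Nat.choose_succ_right_eq N a
      zify [show a ≤ N by omega] at h
      exact_mod_cast h
    have q1 := chooseq k (by omega)
    have q2 := chooseq (k+1) (by omega)
    have q3 := chooseq (k+2) (by omega)
    have q4 := chooseq (k+3) (by omega)
    push_cast at q1 q2 q3 q4
    have hchain : (N.choose (k+4) : ℚ) * (((k:ℚ)+1) * ((k:ℚ)+2) * ((k:ℚ)+3) * ((k:ℚ)+4))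
        = (N.choose k : ℚ) * (((N:ℚ)-k) * ((N:ℚ)-k-1) * ((N:ℚ)-k-2) * ((N:ℚ)-k-3)) := by
      linear_combination (((k:ℚ)+1) * ((k:ℚ)+2) * ((k:ℚ)+3)) * q4
        + (((k:ℚ)+1) * ((k:ℚ)+2) * ((N:ℚ)-k-3)) * q3
        + (((k:ℚ)+1) * ((N:ℚ)-k-2) * ((N:ℚ)-k-3)) * q2
        + (((N:ℚ)-k-1) * ((N:ℚ)-k-2) * ((N:ℚ)-k-3)) * q1
    linear_combination (-2:ℚ) * hchain
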